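/- arXiv:1711.05218 — 2 statements merged into one kernel-verified Lean document; each statement's English description precedes it below -/
import Mathlib

section
/- For triangle ABC with A = (−1/2, 0), B = (1/2, 0), angles α at A and β at B, the locus of intersection points (x, y) of pairs of equal cevians AA₁ = BB₁ with y ≠ 0 satisfies the cubic equation (x² + y²) sin(β+α)(y sin(β−α) − 2x sin α sin β) + (y² − x²) sin α sin β sin(β−α) + xy(sin²α cos²β + sin²β cos²α − 2 sin²α sin²β) + (1/2) x sin α sin β sin(β+α) + (1/4) y sin(β−α) sin(β+α) + (1/4) sin α sin β sin(β−α) = 0. -/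
open EuclideanGeometry Real
open scoped RealInnerProductSpace

noncomputable section

/-- The Euclidean plane. -/
abbrev Pt : Type := EuclideanSpace ℝ (Fin 2)

/-- The point of the Euclidean plane with the given coordinates. -/
def pt (x y : ℝ) : Pt := WithLp.toLp 2 ![x, y]

private lemma inner_eq' (u v : Pt) : ⟪u, v⟫ = u 0 * v 0 + u 1 * v 1 := by
  simp [PiLp.inner_apply, Fin.sum_univ_two, RCLike.inner_apply]; ring

private lemma norm_eq' (u : Pt) : ‖u‖ = Real.sqrt (u 0 ^ 2 + u 1 ^ 2) := by
  rw [EuclideanSpace.norm_eq]; simp [Fin.sum_univ_two, Real.norm_eq_abs, sq_abs]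

private lemma dist_eq' (u v : Pt) :
    dist u v = Real.sqrt ((u 0 - v 0) ^ 2 + (u 1 - v 1) ^ 2) := by
  rw [EuclideanSpace.dist_eq]; simp [Fin.sum_univ_two, Real.dist_eq, sq_abs]

set_option maxHeartbeats 2000000 in
private lemma key_alg (x y c0 c1 rA rB sa ca sb cb : ℝ) (hrA : rA ≠ 0) (hrB : rB ≠ 0)
    (hsa : sa = c1 / rA) (hca : ca = (c0 + 1 / 2) / rA)
    (hsb : sb = c1 / rB) (hcb : cb = (1 / 2 - c0) / rB)
    (hQ : 2 * (x ^ 2 + y ^ 2) * (y * c0 - x * c1) + 2 * c0 * c1 * (y ^ 2 - x ^ 2)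
      + x * y * (2 * c0 ^ 2 + 1 / 2 - 2 * c1 ^ 2)
      + 1 / 2 * (x * c1 + y * c0 + c0 * c1) = 0) :
    (x ^ 2 + y ^ 2) * (sb * ca + cb * sa) * (y * (sb * ca - cb * sa) - 2 * x * sa * sb)
      + (y ^ 2 - x ^ 2) * sa * sb * (sb * ca - cb * sa)
      + x * y * (sa ^ 2 * cb ^ 2 + sb ^ 2 * ca ^ 2 - 2 * sa ^ 2 * sb ^ 2)
      + 1 / 2 * x * sa * sb * (sb * ca + cb * sa)
      + 1 / 4 * y * (sb * ca - cb * sa) * (sb * ca + cb * sa)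
      + 1 / 4 * sa * sb * (sb * ca - cb * sa) = 0 := by
  subst hsa hca hsb hcb
  have h : ((x ^ 2 + y ^ 2) * (c1 / rB * ((c0 + 1 / 2) / rA) + (1 / 2 - c0) / rB * (c1 / rA)) *
        (y * (c1 / rB * ((c0 + 1 / 2) / rA) - (1 / 2 - c0) / rB * (c1 / rA))
          - 2 * x * (c1 / rA) * (c1 / rB))
      + (y ^ 2 - x ^ 2) * (c1 / rA) * (c1 / rB) *
          (c1 / rB * ((c0 + 1 / 2) / rA) - (1 / 2 - c0) / rB * (c1 / rA))
      + x * y * ((c1 / rA) ^ 2 * ((1 / 2 - c0) / rB) ^ 2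
          + (c1 / rB) ^ 2 * ((c0 + 1 / 2) / rA) ^ 2
          - 2 * (c1 / rA) ^ 2 * (c1 / rB) ^ 2)
      + 1 / 2 * x * (c1 / rA) * (c1 / rB) *
          (c1 / rB * ((c0 + 1 / 2) / rA) + (1 / 2 - c0) / rB * (c1 / rA))
      + 1 / 4 * y * (c1 / rB * ((c0 + 1 / 2) / rA) - (1 / 2 - c0) / rB * (c1 / rA)) *
          (c1 / rB * ((c0 + 1 / 2) / rA) + (1 / 2 - c0) / rB * (c1 / rA))
      + 1 / 4 * (c1 / rA) * (c1 / rB) *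
          (c1 / rB * ((c0 + 1 / 2) / rA) - (1 / 2 - c0) / rB * (c1 / rA)))
      = (c1 ^ 2 * (2 * (x ^ 2 + y ^ 2) * (y * c0 - x * c1) + 2 * c0 * c1 * (y ^ 2 - x ^ 2)
          + x * y * (2 * c0 ^ 2 + 1 / 2 - 2 * c1 ^ 2)
          + 1 / 2 * (x * c1 + y * c0 + c0 * c1))) / (rA ^ 2 * rB ^ 2) := by
    field_simp
    ring_nf
  rw [h, hQ, mul_zero, zero_div]


/-- For triangle `ABC` with `A = (−1/2, 0)`, `B = (1/2, 0)`, `C` in the upper half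
plane, angles `α` at `A` and `β` at `B`, the intersection point `(x, y)` (with
`y ≠ 0`) of a pair of equal cevians `AA₁ = BB₁` satisfies the cubic equation of the
equal-cevian locus. -/
theorem equal_cevian_locus_cubic (A B C A₁ B₁ O : Pt) (α β x y : ℝ)
    (hA : A = pt (-(1 / 2)) 0) (hB : B = pt (1 / 2) 0)
    (hABC : AffineIndependent ℝ ![A, B, C])
    (hCup : 0 < C 1)
    (hα : ∠ B A C = α) (hβ : ∠ A B C = β)
    (hA₁ : A₁ ∈ affineSpan ℝ ({B, C} : Set Pt)) (hA₁B : A₁ ≠ B) (hA₁C : A₁ ≠ C)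
    (hB₁ : B₁ ∈ affineSpan ℝ ({A, C} : Set Pt)) (hB₁A : B₁ ≠ A) (hB₁C : B₁ ≠ C)
    (hlen : dist A A₁ = dist B B₁)
    (hO₁ : O ∈ segment ℝ A A₁) (hO₂ : O ∈ segment ℝ B B₁)
    (hx : x = O 0) (hy : y = O 1) (hy0 : y ≠ 0) :
    (x ^ 2 + y ^ 2) * sin (β + α) * (y * sin (β - α) - 2 * x * sin α * sin β)
      + (y ^ 2 - x ^ 2) * sin α * sin β * sin (β - α)
      + x * y * (sin α ^ 2 * cos β ^ 2 + sin β ^ 2 * cos α ^ 2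
          - 2 * sin α ^ 2 * sin β ^ 2)
      + 1 / 2 * x * sin α * sin β * sin (β + α)
      + 1 / 4 * y * sin (β - α) * sin (β + α)
      + 1 / 4 * sin α * sin β * sin (β - α) = 0 := by
  set c0 : ℝ := C 0 with hc0
  set c1 : ℝ := C 1 with hc1def
  have hc1 : 0 < c1 := hCup
  have hA0 : A 0 = -(1 / 2) := by rw [hA]; simp [pt]
  have hA1 : A 1 = 0 := by rw [hA]; simp [pt]
  have hB0 : B 0 = 1 / 2 := by rw [hB]; simp [pt]
  have hB1e : B 1 = 0 := by rw [hB]; simp [pt]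
  -- norms
  set rA : ℝ := ‖C -ᵥ A‖ with hrAdef
  set rB : ℝ := ‖C -ᵥ B‖ with hrBdef
  have hCA0 : (C -ᵥ A) 0 = c0 + 1 / 2 := by
    simp [vsub_eq_sub, PiLp.sub_apply, hA0]; rfl
  have hCA1 : (C -ᵥ A) 1 = c1 := by simp [vsub_eq_sub, PiLp.sub_apply, hA1]; rfl
  have hCB0 : (C -ᵥ B) 0 = c0 - 1 / 2 := by
    simp [vsub_eq_sub, PiLp.sub_apply, hB0]; rfl
  have hCB1 : (C -ᵥ B) 1 = c1 := by simp [vsub_eq_sub, PiLp.sub_apply, hB1e]; rfl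
  have hBA0 : (B -ᵥ A) 0 = 1 := by
    simp [vsub_eq_sub, PiLp.sub_apply, hA0, hB0]; norm_num
  have hBA1 : (B -ᵥ A) 1 = 0 := by simp [vsub_eq_sub, PiLp.sub_apply, hA1, hB1e]
  have hAB0 : (A -ᵥ B) 0 = -1 := by
    simp [vsub_eq_sub, PiLp.sub_apply, hA0, hB0]; norm_num
  have hAB1 : (A -ᵥ B) 1 = 0 := by simp [vsub_eq_sub, PiLp.sub_apply, hA1, hB1e]
  have hrA : rA = Real.sqrt ((c0 + 1 / 2) ^ 2 + c1 ^ 2) := by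
    rw [hrAdef, norm_eq', hCA0, hCA1]
  have hrB : rB = Real.sqrt ((c0 - 1 / 2) ^ 2 + c1 ^ 2) := by
    rw [hrBdef, norm_eq', hCB0, hCB1]
  have hrA0 : 0 < rA := by rw [hrA]; positivity
  have hrB0 : 0 < rB := by rw [hrB]; positivity
  have hnBA : ‖B -ᵥ A‖ = 1 := by
    rw [norm_eq', hBA0, hBA1]; norm_num
  have hnAB : ‖A -ᵥ B‖ = 1 := by
    rw [norm_eq', hAB0, hAB1]; norm_num
  -- trig values
  have hsa : Real.sin α = c1 / rA := by
    have h := InnerProductGeometry.sin_angle_mul_norm_mul_norm (B -ᵥ A) (C -ᵥ A)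
    rw [show InnerProductGeometry.angle (B -ᵥ A) (C -ᵥ A) = α from hα, hnBA, inner_eq', inner_eq', inner_eq', hBA0, hBA1, hCA0, hCA1] at h
    have hex : (1 * 1 + 0 * 0) * ((c0 + 1 / 2) * (c0 + 1 / 2) + c1 * c1)
        - (1 * (c0 + 1 / 2) + 0 * c1) * (1 * (c0 + 1 / 2) + 0 * c1) = c1 ^ 2 := by
      ring
    rw [hex, Real.sqrt_sq hc1.le, one_mul] at h
    field_simp
    linarith [h]
  have hca : Real.cos α = (c0 + 1 / 2) / rA := by
    have h := InnerProductGeometry.cos_angle_mul_norm_mul_norm (B -ᵥ A) (C -ᵥ A)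
    rw [show InnerProductGeometry.angle (B -ᵥ A) (C -ᵥ A) = α from hα, hnBA, inner_eq', hBA0, hBA1, hCA0, hCA1, one_mul] at h
    field_simp
    linarith [h]
  have hsb : Real.sin β = c1 / rB := by
    have h := InnerProductGeometry.sin_angle_mul_norm_mul_norm (A -ᵥ B) (C -ᵥ B)
    rw [show InnerProductGeometry.angle (A -ᵥ B) (C -ᵥ B) = β from hβ, hnAB, inner_eq', inner_eq', inner_eq', hAB0, hAB1, hCB0, hCB1] at h
    have hex : (-1 * -1 + 0 * 0) * ((c0 - 1 / 2) * (c0 - 1 / 2) + c1 * c1)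
        - (-1 * (c0 - 1 / 2) + 0 * c1) * (-1 * (c0 - 1 / 2) + 0 * c1) = c1 ^ 2 := by
      ring
    rw [hex, Real.sqrt_sq hc1.le, one_mul] at h
    field_simp
    linarith [h]
  have hcb : Real.cos β = (1 / 2 - c0) / rB := by
    have h := InnerProductGeometry.cos_angle_mul_norm_mul_norm (A -ᵥ B) (C -ᵥ B)
    rw [show InnerProductGeometry.angle (A -ᵥ B) (C -ᵥ B) = β from hβ, hnAB, inner_eq', hAB0, hAB1, hCB0, hCB1, one_mul] at h
    field_simp
    linarith [h]
  -- cevian parameters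
  obtain ⟨t, ht⟩ := (vadd_left_mem_affineSpan_pair).mp
    (by simpa using hA₁ : (A₁ -ᵥ B) +ᵥ B ∈ affineSpan ℝ ({B, C} : Set Pt))
  obtain ⟨s, hs⟩ := (vadd_left_mem_affineSpan_pair).mp
    (by simpa using hB₁ : (B₁ -ᵥ A) +ᵥ A ∈ affineSpan ℝ ({A, C} : Set Pt))
  have ht0 : t * (c0 - 1 / 2) = A₁ 0 - 1 / 2 := by
    have := congrArg (fun v : Pt => v 0) ht
    simpa [vsub_eq_sub, PiLp.sub_apply, PiLp.smul_apply, smul_eq_mul, hB0, hCB0] using this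
  have ht1 : t * c1 = A₁ 1 := by
    have := congrArg (fun v : Pt => v 1) ht
    simpa [vsub_eq_sub, PiLp.sub_apply, PiLp.smul_apply, smul_eq_mul, hB1e, hCB1] using this
  have hs0 : s * (c0 + 1 / 2) = B₁ 0 + 1 / 2 := by
    have := congrArg (fun v : Pt => v 0) hs
    have h' : s * ((C -ᵥ A) 0) = B₁ 0 - A 0 := by
      simpa [vsub_eq_sub, PiLp.sub_apply, PiLp.smul_apply, smul_eq_mul] using this
    rw [hCA0, hA0] at h'
    linarith
  have hs1 : s * c1 = B₁ 1 := by
    have := congrArg (fun v : Pt => v 1) hs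
    have h' : s * ((C -ᵥ A) 1) = B₁ 1 - A 1 := by
      simpa [vsub_eq_sub, PiLp.sub_apply, PiLp.smul_apply, smul_eq_mul] using this
    rw [hCA1, hA1] at h'
    linarith
  -- segment parameters
  obtain ⟨a, b, ha, hb, hab, hOeq⟩ := hO₁
  obtain ⟨a', b', ha', hb', hab', hOeq'⟩ := hO₂
  have hO10 : a * A 0 + b * A₁ 0 = x := by
    rw [hx, ← hOeq]; simp [PiLp.add_apply, PiLp.smul_apply, smul_eq_mul]
  have hO11 : a * A 1 + b * A₁ 1 = y := by
    rw [hy, ← hOeq]; simp [PiLp.add_apply, PiLp.smul_apply, smul_eq_mul]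
  have hO20 : a' * B 0 + b' * B₁ 0 = x := by
    rw [hx, ← hOeq']; simp [PiLp.add_apply, PiLp.smul_apply, smul_eq_mul]
  have hO21 : a' * B 1 + b' * B₁ 1 = y := by
    rw [hy, ← hOeq']; simp [PiLp.add_apply, PiLp.smul_apply, smul_eq_mul]
  rw [hA0] at hO10; rw [hA1] at hO11; rw [hB0] at hO20; rw [hB1e] at hO21
  -- scalar coordinates of A₁, B₁
  have hA₁0 : A₁ 0 = 1 / 2 + t * (c0 - 1 / 2) := by linarith
  have hA₁1 : A₁ 1 = t * c1 := ht1.symm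
  have hB₁0 : B₁ 0 = -(1 / 2) + s * (c0 + 1 / 2) := by linarith
  have hB₁1 : B₁ 1 = s * c1 := hs1.symm
  rw [hA₁0] at hO10; rw [hA₁1] at hO11
  rw [hB₁0] at hO20; rw [hB₁1] at hO21
  -- key segment identities
  have e1 : x + 1 / 2 = b * (1 + t * (c0 - 1 / 2)) := by
    linear_combination -hO10 - (1 / 2) * hab
  have e2 : y = b * (t * c1) := by linear_combination -hO11
  have e3 : x - 1 / 2 = b' * (s * (c0 + 1 / 2) - 1) := by
    linear_combination -hO20 + (1 / 2) * hab'
  have e4 : y = b' * (s * c1) := by linear_combination -hO21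
  -- equal length, squared
  have e5 : (1 + t * (c0 - 1 / 2)) ^ 2 + (t * c1) ^ 2
      = (s * (c0 + 1 / 2) - 1) ^ 2 + (s * c1) ^ 2 := by
    have h2 : dist A A₁ ^ 2 = dist B B₁ ^ 2 := by rw [hlen]
    rw [dist_eq', dist_eq', Real.sq_sqrt (by positivity), Real.sq_sqrt (by positivity),
      hA0, hA1, hB0, hB1e, hA₁0, hA₁1, hB₁0, hB₁1] at h2
    linear_combination h2
  -- derived identities
  have d1 : (x + 1 / 2) * (t * c1) = y * (1 + t * (c0 - 1 / 2)) := by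
    rw [e1, e2]; ring
  have d2 : (x - 1 / 2) * (s * c1) = y * (s * (c0 + 1 / 2) - 1) := by
    rw [e3, e4]; ring
  have d3 : t * ((x + 1 / 2) * c1 - y * (c0 - 1 / 2)) = y := by
    linear_combination d1
  have d4 : s * (y * (c0 + 1 / 2) - (x - 1 / 2) * c1) = y := by
    linear_combination -d2
  have d5 : t ^ 2 * ((x + 1 / 2) ^ 2 + y ^ 2) * c1 ^ 2
      = y ^ 2 * ((1 + t * (c0 - 1 / 2)) ^ 2 + (t * c1) ^ 2) := by
    linear_combination ((x + 1 / 2) * (t * c1) + y * (1 + t * (c0 - 1 / 2))) * d1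
  have d6 : s ^ 2 * ((x - 1 / 2) ^ 2 + y ^ 2) * c1 ^ 2
      = y ^ 2 * ((s * (c0 + 1 / 2) - 1) ^ 2 + (s * c1) ^ 2) := by
    linear_combination ((x - 1 / 2) * (s * c1) + y * (s * (c0 + 1 / 2) - 1)) * d2
  have d7 : t ^ 2 * ((x + 1 / 2) ^ 2 + y ^ 2) = s ^ 2 * ((x - 1 / 2) ^ 2 + y ^ 2) := by
    have h : t ^ 2 * ((x + 1 / 2) ^ 2 + y ^ 2) * c1 ^ 2
        = s ^ 2 * ((x - 1 / 2) ^ 2 + y ^ 2) * c1 ^ 2 := by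
      linear_combination d5 - d6 + y ^ 2 * e5
    exact mul_right_cancel₀ (pow_ne_zero 2 hc1.ne') h
  have hts : t ≠ 0 := by
    intro h0; apply hy0; rw [← d3, h0]; ring
  have hss : s ≠ 0 := by
    intro h0; apply hy0; rw [← d4, h0]; ring
  -- the star identity
  have h9 : (t ^ 2 * s ^ 2) *
      ((y * (c0 + 1 / 2) - (x - 1 / 2) * c1) ^ 2 * ((x + 1 / 2) ^ 2 + y ^ 2)
        - ((x + 1 / 2) * c1 - y * (c0 - 1 / 2)) ^ 2 * ((x - 1 / 2) ^ 2 + y ^ 2)) = 0 := by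
    linear_combination
      (t ^ 2 * ((x + 1 / 2) ^ 2 + y ^ 2) *
        (s * (y * (c0 + 1 / 2) - (x - 1 / 2) * c1) + y)) * d4
      - (s ^ 2 * ((x - 1 / 2) ^ 2 + y ^ 2) *
        (t * ((x + 1 / 2) * c1 - y * (c0 - 1 / 2)) + y)) * d3
      + y ^ 2 * d7
  have hStar : (y * (c0 + 1 / 2) - (x - 1 / 2) * c1) ^ 2 * ((x + 1 / 2) ^ 2 + y ^ 2)
      - ((x + 1 / 2) * c1 - y * (c0 - 1 / 2)) ^ 2 * ((x - 1 / 2) ^ 2 + y ^ 2) = 0 :=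
    (mul_eq_zero.mp h9).resolve_left
      (mul_ne_zero (pow_ne_zero 2 hts) (pow_ne_zero 2 hss))
  -- the cubic in coordinates
  have hQ : 2 * (x ^ 2 + y ^ 2) * (y * c0 - x * c1) + 2 * c0 * c1 * (y ^ 2 - x ^ 2)
      + x * y * (2 * c0 ^ 2 + 1 / 2 - 2 * c1 ^ 2)
      + 1 / 2 * (x * c1 + y * c0 + c0 * c1) = 0 := by
    have h : y * (2 * (x ^ 2 + y ^ 2) * (y * c0 - x * c1) + 2 * c0 * c1 * (y ^ 2 - x ^ 2)
        + x * y * (2 * c0 ^ 2 + 1 / 2 - 2 * c1 ^ 2)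
        + 1 / 2 * (x * c1 + y * c0 + c0 * c1)) = 0 := by
      linear_combination hStar
    exact (mul_eq_zero.mp h).resolve_left hy0
  -- conclude
  rw [Real.sin_add, Real.sin_sub]
  exact key_alg x y c0 c1 rA rB _ _ _ _ hrA0.ne' hrB0.ne' hsa hca hsb hcb hQ
end
end

section
/- The cubic locus of equal-cevian intersection points of triangle ABC (with A = (−1/2,0), B = (1/2,0), angles α at A, β at B, α ≠ β) intersects line AB exactly at x = −1/2, x = 1/2, and x = −sin(β−α)/(2 sin(β+α)); the last point is symmetric, with respect to the midpoint of AB, to the foot of the altitude from C. -/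
open EuclideanGeometry Real

noncomputable section

/-- Auxiliary: cosine and sine of the angle at `pt p 0` between `pt q 0` and `C`,
scaled by the distance from `C`. -/
lemma cos_sin_angle_aux (p q : ℝ) (C : Pt) (hCup : 0 < C 1) (hpq : |q - p| = 1) :
    Real.cos (∠ (pt q 0) (pt p 0) C) * ‖C -ᵥ pt p 0‖ = (C 0 - p) * (q - p) ∧
    Real.sin (∠ (pt q 0) (pt p 0) C) * ‖C -ᵥ pt p 0‖ = C 1 := by
  set α := ∠ (pt q 0) (pt p 0) C with hαdef
  set cx := C 0 with hcx
  set cy := C 1 with hcy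
  set a := ‖C -ᵥ pt p 0‖ with ha
  have ha2 : a ^ 2 = (cx - p) ^ 2 + cy ^ 2 := by
    rw [ha, EuclideanSpace.norm_eq, Real.sq_sqrt (by positivity)]
    simp [PiLp.inner_apply, Fin.sum_univ_two, RCLike.inner_apply, pt, vsub_eq_sub]
    ring
  have hapos : 0 < a := by
    have h2 : 0 < a ^ 2 := by rw [ha2]; positivity
    have := norm_nonneg (C -ᵥ pt p 0)
    nlinarith
  have hq2 : (q - p) ^ 2 = 1 := by
    have := sq_abs (q - p); nlinarith [hpq]
  have hnQP : ‖(pt q 0 : Pt) -ᵥ pt p 0‖ = 1 := by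
    rw [show ‖(pt q 0 : Pt) -ᵥ pt p 0‖ =
      Real.sqrt (‖(pt q 0 : Pt) -ᵥ pt p 0‖ ^ 2) by rw [Real.sqrt_sq (norm_nonneg _)],
      ← real_inner_self_eq_norm_sq]
    have h1 : (q - p) * (q - p) = 1 := by nlinarith [hq2]
    simp [EuclideanSpace.norm_eq, PiLp.inner_apply, Fin.sum_univ_two, RCLike.inner_apply, pt, vsub_eq_sub]
    exact (abs_eq zero_le_one).mp hpq
  have hcos := InnerProductGeometry.cos_angle ((pt q 0 : Pt) -ᵥ pt p 0) (C -ᵥ pt p 0)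
  rw [show InnerProductGeometry.angle ((pt q 0 : Pt) -ᵥ pt p 0) (C -ᵥ pt p 0) = α from rfl] at hcos
  have hinner : (inner ℝ ((pt q 0 : Pt) -ᵥ pt p 0) (C -ᵥ pt p 0) : ℝ) = (cx - p) * (q - p) := by
    simp [PiLp.inner_apply, Fin.sum_univ_two, RCLike.inner_apply, pt, vsub_eq_sub, hcx]
  rw [hinner, hnQP, one_mul, ← ha] at hcos
  have hcosa : Real.cos α * a = (cx - p) * (q - p) := by
    rw [hcos, div_mul_cancel₀ _ (ne_of_gt hapos)]
  refine ⟨hcosa, ?_⟩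
  have hsin_nonneg : 0 ≤ Real.sin α := by
    rw [hαdef]
    exact Real.sin_nonneg_of_nonneg_of_le_pi (angle_nonneg _ _ _) (angle_le_pi _ _ _)
  have hpyth := Real.sin_sq_add_cos_sq α
  have hsq : (Real.sin α * a) ^ 2 = cy ^ 2 := by
    have hc2 : (Real.cos α * a) ^ 2 = (cx - p) ^ 2 := by
      rw [hcosa, mul_pow, hq2, mul_one]
    nlinarith [hpyth, ha2, hc2]
  have h1 : 0 ≤ Real.sin α * a := by positivity
  nlinarith [hsq, h1, hCup]

set_option maxHeartbeats 2000000 in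
/-- The cubic equal-cevian locus of a triangle with `A = (−1/2, 0)`, `B = (1/2, 0)`,
angles `α ≠ β` at `A` and `B`, meets the line `AB` (i.e. `y = 0`) exactly at
`x = −1/2`, `x = 1/2` and `x = −sin(β−α)/(2 sin(β+α))`; the last point is symmetric,
with respect to the midpoint of `AB`, to the foot `H` of the altitude from `C`. -/
theorem cubic_locus_meets_base (A B C H : Pt) (α β : ℝ)
    (hA : A = pt (-(1 / 2)) 0) (hB : B = pt (1 / 2) 0)
    (hABC : AffineIndependent ℝ ![A, B, C])
    (hCup : 0 < C 1)
    (hα : ∠ B A C = α) (hβ : ∠ A B C = β) (hne : α ≠ β)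
    (hH : H ∈ affineSpan ℝ ({A, B} : Set Pt))
    (hCH : (inner ℝ (C -ᵥ H) (B -ᵥ A) : ℝ) = 0) :
    (∀ x : ℝ,
      (x ^ 2 + (0 : ℝ) ^ 2) * sin (β + α)
          * ((0 : ℝ) * sin (β - α) - 2 * x * sin α * sin β)
        + ((0 : ℝ) ^ 2 - x ^ 2) * sin α * sin β * sin (β - α)
        + x * 0 * (sin α ^ 2 * cos β ^ 2 + sin β ^ 2 * cos α ^ 2
            - 2 * sin α ^ 2 * sin β ^ 2)
        + 1 / 2 * x * sin α * sin β * sin (β + α)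
        + 1 / 4 * (0 : ℝ) * sin (β - α) * sin (β + α)
        + 1 / 4 * sin α * sin β * sin (β - α) = 0 ↔
        x = -(1 / 2) ∨ x = 1 / 2 ∨ x = -sin (β - α) / (2 * sin (β + α))) ∧
    -sin (β - α) / (2 * sin (β + α)) = -(H 0) := by
  set cx := C 0 with hcx
  set cy := C 1 with hcy
  -- angle at A
  have hAux := cos_sin_angle_aux (-(1/2)) (1/2) C hCup (by norm_num)
  rw [← hA, ← hB, hα] at hAux
  obtain ⟨hcosα, hsinα⟩ := hAux
  -- angle at B
  have hBux := cos_sin_angle_aux (1/2) (-(1/2)) C hCup (by norm_num)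
  rw [← hA, ← hB, hβ] at hBux
  obtain ⟨hcosβ, hsinβ⟩ := hBux
  set a := ‖C -ᵥ A‖ with ha
  set b := ‖C -ᵥ B‖ with hb
  have hcosα' : Real.cos α * a = cx + 1/2 := by linear_combination hcosα
  have hcosβ' : Real.cos β * b = 1/2 - cx := by linear_combination hcosβ
  have hapos : 0 < a := by
    rcases (norm_nonneg (C -ᵥ A)).lt_or_eq with h | h
    · exact h
    · exfalso
      have h0 : a = 0 := by rw [ha, ← h]
      rw [h0, mul_zero] at hsinα
      linarith [hCup]
  have hbpos : 0 < b := by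
    rcases (norm_nonneg (C -ᵥ B)).lt_or_eq with h | h
    · exact h
    · exfalso
      have h0 : b = 0 := by rw [hb, ← h]
      rw [h0, mul_zero] at hsinβ
      linarith [hCup]
  have hsa : 0 < Real.sin α := by
    by_contra h
    push_neg at h
    nlinarith [hsinα, hapos, hCup]
  have hsb : 0 < Real.sin β := by
    by_contra h
    push_neg at h
    nlinarith [hsinβ, hbpos, hCup]
  have hS : Real.sin (β + α) * (a * b) = cy := by
    rw [Real.sin_add]
    linear_combination (Real.cos α * a) * hsinβ + cy * hcosα' + (Real.sin α * a) * hcosβ'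
      + (1/2 - cx) * hsinα
  have hD : Real.sin (β - α) * (a * b) = 2 * cx * cy := by
    rw [Real.sin_sub]
    linear_combination (Real.cos α * a) * hsinβ + cy * hcosα' - (Real.sin α * a) * hcosβ'
      - (1/2 - cx) * hsinα
  have hSpos : 0 < Real.sin (β + α) := by
    by_contra h
    push_neg at h
    nlinarith [hS, hapos, hbpos, hCup, mul_pos hapos hbpos]
  have hab : a * b ≠ 0 := by positivity
  have hDval : Real.sin (β - α) = 2 * cx * Real.sin (β + α) := by
    apply mul_right_cancel₀ hab
    rw [hD]
    linear_combination (2 * cx) * hS.symm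
  have hfoot : H 0 = cx := by
    have h1 : (inner ℝ (C -ᵥ H) (B -ᵥ A) : ℝ) = cx - H 0 := by
      rw [hA, hB]
      simp [PiLp.inner_apply, Fin.sum_univ_two, RCLike.inner_apply, pt, vsub_eq_sub, hcx]
      ring
    rw [h1] at hCH
    linarith
  constructor
  · intro x
    constructor
    · intro h
      have h2 : (2 * Real.sin (β + α) * x + Real.sin (β - α)) * (x ^ 2 - 1/4) = 0 := by
        have h' : -(Real.sin α * Real.sin β) *
            ((2 * Real.sin (β + α) * x + Real.sin (β - α)) * (x ^ 2 - 1/4)) = 0 := by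
          linear_combination h
        rcases mul_eq_zero.mp h' with h'' | h''
        · exfalso; nlinarith [hsa, hsb]
        · exact h''
      rcases mul_eq_zero.mp h2 with h3 | h3
      · right; right
        rw [eq_div_iff (show (2 * Real.sin (β + α)) ≠ 0 from ne_of_gt (by linarith))]
        linarith [h3]
      · have h4 : (x - 1/2) * (x + 1/2) = 0 := by linear_combination h3
        rcases mul_eq_zero.mp h4 with h5 | h5
        · right; left; linarith
        · left; linarith
    · rintro (rfl | rfl | rfl)
      · ring
      · ring
      · field_simp [hSpos.ne']
        ring
  · rw [hDval, hfoot]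
    field_simp
end
end
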